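/- (Dugundji-type theorem) No system between Km and T45m can be characterized by a single finite deterministic logical matrix: there is no deterministic logical matrix (M, D) over {¬,→,□} with M finite such that both (a) Γ ⊢_Km α implies Γ ⊨_M α for all sets of formulas Γ and formulas α, and (b) every formula valid in (M,D) is a theorem of T45m. -/

import Mathlib

/- ## Syntax of the modal language -/

inductive Form : Type
  | var : Nat → Form
  | neg : Form → Form
  | imp : Form → Form → Form
  | box : Form → Form
  deriving DecidableEq

namespace Form
/-- ◇α := ¬□¬α -/
def dia (α : Form) : Form := neg (box (neg α))
/-- α∨β := ¬α→β -/
def disj (α β : Form) : Form := imp (neg α) β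
/-- α∧β := ¬(α→¬β) -/
def conj (α β : Form) : Form := neg (imp α (neg β))
end Form

open Form

/-- Substitution instances of classical tautologies over {¬,→}: formulas true under
every Boolean assignment that respects negation and implication. -/
def Taut (φ : Form) : Prop :=
  ∀ v : Form → Bool,
    (∀ α, v (Form.neg α) = !(v α)) →
    (∀ α β, v (Form.imp α β) = (!(v α) || v β)) →
    v φ = true

/-- Hilbert-style derivations from a set of premises, with Modus Ponens as the only
inference rule, given a set `Ax` of axioms. -/
inductive Deriv (Ax : Form → Prop) (Γ : Set Form) : Form → Prop
  | prem {φ : Form} : φ ∈ Γ → Deriv Ax Γ φ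
  | ax {φ : Form} : Ax φ → Deriv Ax Γ φ
  | mp {φ ψ : Form} : Deriv Ax Γ (Form.imp φ ψ) → Deriv Ax Γ φ → Deriv Ax Γ ψ

/- ## Axiom schemas -/

def axK (α β : Form) : Form := (box (α.imp β)).imp ((box α).imp (box β))
def axK1 (α β : Form) : Form := (box (α.imp β)).imp ((dia α).imp (dia β))
def axK2 (α β : Form) : Form := (dia (α.imp β)).imp ((box α).imp (dia β))
def axM1 (α β : Form) : Form := (Form.neg (dia α)).imp (box (α.imp β))
def axM2 (α β : Form) : Form := (box β).imp (box (α.imp β))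
def axM3 (α β : Form) : Form := (dia β).imp (dia (α.imp β))
def axM4 (α β : Form) : Form := (dia (Form.neg α)).imp (dia (α.imp β))
def axT (α : Form) : Form := (box α).imp α
def axD (α : Form) : Form := (box α).imp (dia α)
def axDN1 (α : Form) : Form := (box α).imp (box (Form.neg (Form.neg α)))
def axDN2 (α : Form) : Form := (box (Form.neg (Form.neg α))).imp (box α)
def ax4 (α : Form) : Form := (box α).imp (box (box α))
def ax5 (α : Form) : Form := (dia (box α)).imp (box α)
def axKdet (α β : Form) : Form := (box (α.imp β)).imp ((dia α).imp (box β))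

def axK' (α β : Form) : Form := (dia α).imp (axK α β)
def axK1' (α β : Form) : Form := (dia (Form.neg β)).imp (axK1 α β)
def axK2' (α β : Form) : Form := (dia α).imp (axK2 α β)
def axM3' (α β : Form) : Form := ((dia α).disj (dia (Form.neg α))).imp (axM3 α β)
def axM4' (α β : Form) : Form := (dia (Form.neg β)).imp (axM4 α β)
def axI1 (α β : Form) : Form :=
  ((box α).conj (box (Form.neg α))).imp ((box (α.imp β)).conj (box (Form.neg (α.imp β))))
def axI2 (α β : Form) : Form :=
  ((box β).conj (box (Form.neg β))).imp ((box (α.imp β)).conj (box (Form.neg (α.imp β))))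

/-- The recovery operator ∘α := □α→◇α. -/
def circm (α : Form) : Form := (box α).imp (dia α)
/-- •α := ¬∘α. -/
def bulm (α : Form) : Form := Form.neg (circm α)
/-- The recovery operator ∘'α := (□α→α)∧(□¬α→¬α). -/
def circm' (α : Form) : Form :=
  ((box α).imp α).conj ((box (Form.neg α)).imp (Form.neg α))

/- ## Hilbert calculi -/

/-- The system Km. -/
inductive KmAx : Form → Prop
  | pc {φ : Form} : Taut φ → KmAx φ
  | k' (α β : Form) : KmAx (axK' α β)
  | k1' (α β : Form) : KmAx (axK1' α β)
  | k2' (α β : Form) : KmAx (axK2' α β)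
  | m1 (α β : Form) : KmAx (axM1 α β)
  | m2 (α β : Form) : KmAx (axM2 α β)
  | m3' (α β : Form) : KmAx (axM3' α β)
  | m4' (α β : Form) : KmAx (axM4' α β)
  | i1 (α β : Form) : KmAx (axI1 α β)
  | i2 (α β : Form) : KmAx (axI2 α β)
  | dn1 (α : Form) : KmAx (axDN1 α)
  | dn2 (α : Form) : KmAx (axDN2 α)

/-- The system K4m = Km + (4). -/
inductive K4mAx : Form → Prop
  | km {φ : Form} : KmAx φ → K4mAx φ
  | four (α : Form) : K4mAx (ax4 α)

/-- The system K45m = Km + (4) + (5). -/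
inductive K45mAx : Form → Prop
  | km {φ : Form} : KmAx φ → K45mAx φ
  | four (α : Form) : K45mAx (ax4 α)
  | five (α : Form) : K45mAx (ax5 α)

/-- The system Dm. -/
inductive DmAx : Form → Prop
  | pc {φ : Form} : Taut φ → DmAx φ
  | k (α β : Form) : DmAx (axK α β)
  | k1 (α β : Form) : DmAx (axK1 α β)
  | k2 (α β : Form) : DmAx (axK2 α β)
  | m1 (α β : Form) : DmAx (axM1 α β)
  | m2 (α β : Form) : DmAx (axM2 α β)
  | m3 (α β : Form) : DmAx (axM3 α β)
  | m4 (α β : Form) : DmAx (axM4 α β)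
  | d (α : Form) : DmAx (axD α)
  | dn1 (α : Form) : DmAx (axDN1 α)
  | dn2 (α : Form) : DmAx (axDN2 α)

/-- The system Tm. -/
inductive TmAx : Form → Prop
  | pc {φ : Form} : Taut φ → TmAx φ
  | k (α β : Form) : TmAx (axK α β)
  | k1 (α β : Form) : TmAx (axK1 α β)
  | k2 (α β : Form) : TmAx (axK2 α β)
  | m1 (α β : Form) : TmAx (axM1 α β)
  | m2 (α β : Form) : TmAx (axM2 α β)
  | m3 (α β : Form) : TmAx (axM3 α β)
  | m4 (α β : Form) : TmAx (axM4 α β)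
  | t (α : Form) : TmAx (axT α)
  | dn1 (α : Form) : TmAx (axDN1 α)
  | dn2 (α : Form) : TmAx (axDN2 α)

/-- The system T45m = Tm + (4) + (5). -/
inductive T45mAx : Form → Prop
  | tm {φ : Form} : TmAx φ → T45mAx φ
  | four (α : Form) : T45mAx (ax4 α)
  | five (α : Form) : T45mAx (ax5 α)

/-- The system Tmd: Tm with (K1) replaced by (Kdet). -/
inductive TmdAx : Form → Prop
  | pc {φ : Form} : Taut φ → TmdAx φ
  | k (α β : Form) : TmdAx (axK α β)
  | kdet (α β : Form) : TmdAx (axKdet α β)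
  | k2 (α β : Form) : TmdAx (axK2 α β)
  | m1 (α β : Form) : TmdAx (axM1 α β)
  | m2 (α β : Form) : TmdAx (axM2 α β)
  | m3 (α β : Form) : TmdAx (axM3 α β)
  | m4 (α β : Form) : TmdAx (axM4 α β)
  | t (α : Form) : TmdAx (axT α)
  | dn1 (α : Form) : TmdAx (axDN1 α)
  | dn2 (α : Form) : TmdAx (axDN2 α)

/-- The system Tm4d = Tmd + (4). -/
inductive Tm4dAx : Form → Prop
  | tmd {φ : Form} : TmdAx φ → Tm4dAx φ
  | four (α : Form) : Tm4dAx (ax4 α)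

/-- The system Tm + (Kdet). -/
inductive TmKdetAx : Form → Prop
  | tm {φ : Form} : TmAx φ → TmKdetAx φ
  | kdet (α β : Form) : TmKdetAx (axKdet α β)

/-- The system Km∘. -/
inductive KmCircAx : Form → Prop
  | pc {φ : Form} : Taut φ → KmCircAx φ
  | k'' (α β : Form) : KmCircAx ((circm α).imp (axK α β))
  | k1'' (α β : Form) : KmCircAx ((circm β).imp (axK1 α β))
  | k2'' (α β : Form) : KmCircAx ((circm α).imp (axK2 α β))
  | m1 (α β : Form) : KmCircAx (axM1 α β)
  | m2 (α β : Form) : KmCircAx (axM2 α β)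
  | m3'' (α β : Form) : KmCircAx ((circm α).imp (axM3 α β))
  | m4'' (α β : Form) : KmCircAx ((circm β).imp (axM4 α β))
  | i1' (α β : Form) : KmCircAx ((bulm α).imp (bulm (α.imp β)))
  | i2' (α β : Form) : KmCircAx ((bulm β).imp (bulm (α.imp β)))
  | dn1 (α : Form) : KmCircAx (axDN1 α)
  | dn2 (α : Form) : KmCircAx (axDN2 α)

/- ## The eight-valued non-deterministic semantics -/

/-- The modal "letters" T, C, F, I. -/
inductive Ltr : Type
  | T | C | F | I
  deriving DecidableEq

/-- An eight-valued truth-value: a letter together with a sign (`true` = +). -/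
structure V8 where
  ltr : Ltr
  sgn : Bool
  deriving DecidableEq

/-- Designated values: those with sign +. -/
def V8.desig (x : V8) : Prop := x.sgn = true

/-- Letter of the negation. -/
def lneg : Ltr → Ltr
  | .T => .F
  | .C => .C
  | .F => .T
  | .I => .I

/-- The (deterministic) multioperator for ¬. -/
def neg8 (x : V8) : Set V8 := {⟨lneg x.ltr, !x.sgn⟩}

/-- Set of possible letters of an implication, given the letters of the components. -/
def limp : Ltr → Ltr → Set Ltr
  | .I, _ => {Ltr.I}
  | .T, .I => {Ltr.I}
  | .C, .I => {Ltr.I}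
  | .F, .I => {Ltr.I}
  | .T, .T => {Ltr.T}
  | .T, .C => {Ltr.C}
  | .T, .F => {Ltr.F}
  | .C, .T => {Ltr.T}
  | .C, .C => {Ltr.T, Ltr.C}
  | .C, .F => {Ltr.C}
  | .F, .T => {Ltr.T}
  | .F, .C => {Ltr.T}
  | .F, .F => {Ltr.T}

/-- The multioperator for →: sign is material implication of the signs, letter as in `limp`. -/
def imp8 (x y : V8) : Set V8 :=
  { z | z.ltr ∈ limp x.ltr y.ltr ∧ z.sgn = (!x.sgn || y.sgn) }

/-- The multioperator for □ in (the Nmatrix for) Km. -/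
def box8Km (x : V8) : Set V8 :=
  if x.ltr = Ltr.T ∨ x.ltr = Ltr.I then { z | z.sgn = true } else { z | z.sgn = false }

/-- The multioperator for □ in the Nmatrix for K4m. -/
def box8K4m (x : V8) : Set V8 :=
  if x.ltr = Ltr.T ∨ x.ltr = Ltr.I then ({⟨Ltr.T, true⟩, ⟨Ltr.I, true⟩} : Set V8)
  else { z | z.sgn = false }

/-- The multioperator for □ in the Nmatrix for K45m. -/
def box8K45m (x : V8) : Set V8 :=
  if x.ltr = Ltr.T ∨ x.ltr = Ltr.I then ({⟨Ltr.T, true⟩, ⟨Ltr.I, true⟩} : Set V8)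
  else ({⟨Ltr.F, false⟩, ⟨Ltr.I, false⟩} : Set V8)

/-- A valuation over the eight-valued Nmatrix with the given □-multioperator. -/
def IsVal8 (boxOp : V8 → Set V8) (v : Form → V8) : Prop :=
  (∀ α, v (Form.neg α) ∈ neg8 (v α)) ∧
  (∀ α β, v (Form.imp α β) ∈ imp8 (v α) (v β)) ∧
  (∀ α, v (Form.box α) ∈ boxOp (v α))

/-- Semantic consequence over the eight-valued Nmatrix with the given □-multioperator. -/
def NmEntails (boxOp : V8 → Set V8) (Γ : Set Form) (φ : Form) : Prop :=
  ∀ v : Form → V8, IsVal8 boxOp v → (∀ γ ∈ Γ, (v γ).desig) → (v φ).desig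

/- ## Multialgebras -/

/-- A multialgebra over {¬,→,□}, presented on the carrier `V8` with a chosen domain. -/
structure MAlg where
  dom : Set V8
  negOp : V8 → Set V8
  impOp : V8 → V8 → Set V8
  boxOp : V8 → Set V8

/-- `A` is a submultialgebra of `B`. -/
def SubMAlg (A B : MAlg) : Prop :=
  A.dom ⊆ B.dom ∧
  (∀ x ∈ A.dom, A.negOp x ⊆ B.negOp x) ∧
  (∀ x ∈ A.dom, ∀ y ∈ A.dom, A.impOp x y ⊆ B.impOp x y) ∧
  (∀ x ∈ A.dom, A.boxOp x ⊆ B.boxOp x)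

/-- Domain of the Nmatrix for Dm: the six non-I values. -/
def domDm : Set V8 := { x | x.ltr ≠ Ltr.I }

/-- Domain of the Nmatrix for Tm: {T+, C+, C−, F−}. -/
def domTm : Set V8 :=
  ({⟨Ltr.T, true⟩, ⟨Ltr.C, true⟩, ⟨Ltr.C, false⟩, ⟨Ltr.F, false⟩} : Set V8)

/-- The multialgebra underlying the Nmatrix for Km. -/
def A_Km : MAlg := ⟨Set.univ, neg8, imp8, box8Km⟩

/-- The □-multioperator of Dm: T ↦ {T+,C+,F+}, C∪F ↦ {T−,C−,F−}. -/
def boxDm (x : V8) : Set V8 :=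
  if x.ltr = Ltr.T then { z | z.sgn = true } ∩ domDm else { z | z.sgn = false } ∩ domDm

/-- The multialgebra underlying the Nmatrix for Dm. -/
def A_Dm : MAlg :=
  ⟨domDm, fun x => neg8 x ∩ domDm, fun x y => imp8 x y ∩ domDm, boxDm⟩

/-- The □-multioperator of Tm: T+ ↦ {T+,C+}, and C+, C−, F− ↦ {C−,F−}. -/
def boxTm (x : V8) : Set V8 :=
  if x = ⟨Ltr.T, true⟩ then ({⟨Ltr.T, true⟩, ⟨Ltr.C, true⟩} : Set V8)
  else ({⟨Ltr.C, false⟩, ⟨Ltr.F, false⟩} : Set V8)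

/-- The multialgebra underlying the Nmatrix for Tm. -/
def A_Tm : MAlg :=
  ⟨domTm, fun x => neg8 x ∩ domTm, fun x y => imp8 x y ∩ domTm, boxTm⟩

/- ## The four-valued Nmatrix for Tmd -/

/-- The four values T+, C+, C−, F−. -/
inductive V4 : Type
  | Tp | Cp | Cm | Fm
  deriving DecidableEq

/-- Designated values of the Tmd Nmatrix: T+ and C+. -/
def V4.desig (x : V4) : Prop := x = V4.Tp ∨ x = V4.Cp

/-- Negation: deterministic. -/
def neg4 : V4 → V4
  | .Tp => .Fm
  | .Cp => .Cm
  | .Cm => .Cp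
  | .Fm => .Tp

/-- Position in the chain F− < C− < C+ < T+. -/
def rank4 : V4 → Nat
  | .Fm => 0
  | .Cm => 1
  | .Cp => 2
  | .Tp => 3

def ofRank4 : Nat → V4
  | 0 => .Fm
  | 1 => .Cm
  | 2 => .Cp
  | _ => .Tp

/-- The deterministic implication of Tmd: x→y is the maximum of ¬x and y in the chain. -/
def imp4 (x y : V4) : V4 := ofRank4 (max (rank4 (neg4 x)) (rank4 y))

/-- The □-multioperator of Tmd: T+ ↦ {T+,C+}; C+, C−, F− ↦ {C−,F−}. -/
def box4 (x : V4) : Set V4 :=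
  if x = V4.Tp then ({V4.Tp, V4.Cp} : Set V4) else ({V4.Cm, V4.Fm} : Set V4)

/-- A valuation over the Nmatrix for Tmd. -/
def IsVal4 (v : Form → V4) : Prop :=
  (∀ α, v (Form.neg α) = neg4 (v α)) ∧
  (∀ α β, v (Form.imp α β) = imp4 (v α) (v β)) ∧
  (∀ α, v (Form.box α) ∈ box4 (v α))

/-- Semantic consequence over the Nmatrix for Tmd. -/
def TmdEntails (Γ : Set Form) (φ : Form) : Prop :=
  ∀ v : Form → V4, IsVal4 v → (∀ γ ∈ Γ, (v γ).desig) → (v φ).desig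

/- ## Deterministic logical matrices -/

/-- A deterministic logical matrix over the signature {¬,→,□}. -/
structure DetMatrix where
  carrier : Type
  negOp : carrier → carrier
  impOp : carrier → carrier → carrier
  boxOp : carrier → carrier
  desig : Set carrier

/-- A valuation (homomorphism) over a deterministic matrix. -/
def DetMatrix.IsVal (Mat : DetMatrix) (h : Form → Mat.carrier) : Prop :=
  (∀ α, h (Form.neg α) = Mat.negOp (h α)) ∧
  (∀ α β, h (Form.imp α β) = Mat.impOp (h α) (h β)) ∧
  (∀ α, h (Form.box α) = Mat.boxOp (h α))

/-- Semantic consequence over a deterministic matrix. -/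
def DetMatrix.Entails (Mat : DetMatrix) (Γ : Set Form) (φ : Form) : Prop :=
  ∀ h : Form → Mat.carrier, Mat.IsVal h → (∀ γ ∈ Γ, h γ ∈ Mat.desig) → h φ ∈ Mat.desig

/-- Validity in a deterministic matrix. -/
def DetMatrix.Valid (Mat : DetMatrix) (φ : Form) : Prop :=
  ∀ h : Form → Mat.carrier, Mat.IsVal h → h φ ∈ Mat.desig

/- ## The Dugundji formulas δ(m) -/

/-- Left-associated disjunction of a nonempty list of formulas. -/
def bigOr : List Form → Form
  | [] => Form.var 0
  | a :: l => l.foldl Form.disj a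

/-- α(m): the left-associated disjunction of the variables p_1, …, p_m. -/
def alphaF (m : Nat) : Form := bigOr ((List.range m).map Form.var)

/-- β_i(m): the left-associated disjunction of p_1, …, p_m with p_i omitted. -/
def betaF (m i : Nat) : Form :=
  bigOr (((List.range m).filter (fun j => j != i)).map Form.var)

/-- δ(m): the left-associated disjunction of the formulas □α(m)→□β_i(m), 1 ≤ i ≤ m. -/
def deltaF (m : Nat) : Form :=
  bigOr ((List.range m).map (fun i => (Form.box (alphaF m)).imp (Form.box (betaF m i))))
namespace Dug

/-- Boolean Kripke evaluation over the universal frame on `Fin m`. -/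
def ev (m : Nat) (V : Nat → Fin m → Bool) : Form → Fin m → Bool
  | Form.var k, w => V k w
  | Form.neg a, w => !(ev m V a w)
  | Form.imp a b, w => !(ev m V a w) || ev m V b w
  | Form.box a, _ => decide (∀ u, ev m V a u = true)

variable {m : Nat} {V : Nat → Fin m → Bool}

lemma ev_box {a : Form} {w : Fin m} :
    ev m V (Form.box a) w = true ↔ ∀ u, ev m V a u = true := by
  simp [ev]

lemma ev_neg {a : Form} {w : Fin m} :
    ev m V (Form.neg a) w = true ↔ ¬ (ev m V a w = true) := by
  simp [ev]

lemma ev_imp {a b : Form} {w : Fin m} :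
    ev m V (Form.imp a b) w = true ↔ (ev m V a w = true → ev m V b w = true) := by
  simp [ev]; cases ev m V a w <;> simp

lemma ev_dia {a : Form} {w : Fin m} :
    ev m V (Form.dia a) w = true ↔ ∃ u, ev m V a u = true := by
  simp [Form.dia, ev]

lemma ev_taut {φ : Form} (h : Taut φ) (w : Fin m) : ev m V φ w = true := by
  apply h (fun ψ => ev m V ψ w)
  · intro α; rfl
  · intro α β; rfl

lemma sound_T45m {φ : Form} (h : Deriv T45mAx ∅ φ) (w : Fin m) : ev m V φ w = true := by
  induction h with
  | prem hp => exact absurd hp (by simp)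
  | mp _ _ ih1 ih2 =>
      rw [ev_imp] at ih1
      exact ih1 ih2
  | ax hax =>
      cases hax with
      | four α =>
          rw [ax4, ev_imp]
          intro h1
          rw [ev_box] at h1
          rw [ev_box]
          intro u
          rw [ev_box]
          exact h1
      | five α =>
          rw [ax5, ev_imp]
          intro h1
          rw [ev_dia] at h1
          obtain ⟨u, hu⟩ := h1
          rw [ev_box] at hu ⊢
          exact hu
      | tm htm =>
        cases htm with
        | pc ht => exact ev_taut ht w
        | k α β =>
            rw [axK, ev_imp, ev_box, ev_imp, ev_box, ev_box]
            intro h1 h2 u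
            exact (ev_imp.mp (h1 u)) (h2 u)
        | k1 α β =>
            rw [axK1, ev_imp, ev_box, ev_imp, ev_dia, ev_dia]
            rintro h1 ⟨u, hu⟩
            exact ⟨u, (ev_imp.mp (h1 u)) hu⟩
        | k2 α β =>
            rw [axK2, ev_imp, ev_dia, ev_imp, ev_box, ev_dia]
            rintro ⟨u, hu⟩ h2
            exact ⟨u, (ev_imp.mp hu) (h2 u)⟩
        | m1 α β =>
            rw [axM1, ev_imp, ev_neg, ev_box]
            intro h1 u
            rw [ev_imp]
            intro ha
            exact absurd (ev_dia.mpr ⟨u, ha⟩) h1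
        | m2 α β =>
            rw [axM2, ev_imp, ev_box, ev_box]
            intro h1 u
            rw [ev_imp]
            exact fun _ => h1 u
        | m3 α β =>
            rw [axM3, ev_imp, ev_dia, ev_dia]
            rintro ⟨u, hu⟩
            exact ⟨u, ev_imp.mpr fun _ => hu⟩
        | m4 α β =>
            rw [axM4, ev_imp, ev_dia, ev_dia]
            rintro ⟨u, hu⟩
            rw [ev_neg] at hu
            exact ⟨u, ev_imp.mpr fun ha => absurd ha hu⟩
        | t α =>
            rw [axT, ev_imp, ev_box]
            intro h1
            exact h1 w
        | dn1 α =>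
            rw [axDN1, ev_imp, ev_box, ev_box]
            intro h1 u
            rw [ev_neg, ev_neg]
            simpa using h1 u
        | dn2 α =>
            rw [axDN2, ev_imp, ev_box, ev_box]
            intro h1 u
            have := h1 u
            rw [ev_neg, ev_neg] at this
            simpa using this

/-- The valuation over a deterministic matrix determined by variable values `g`. -/
def detVal (Mat : DetMatrix) (g : Nat → Mat.carrier) : Form → Mat.carrier
  | Form.var k => g k
  | Form.neg a => Mat.negOp (detVal Mat g a)
  | Form.imp a b => Mat.impOp (detVal Mat g a) (detVal Mat g b)
  | Form.box a => Mat.boxOp (detVal Mat g a)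

lemma detVal_isVal (Mat : DetMatrix) (g : Nat → Mat.carrier) : Mat.IsVal (detVal Mat g) :=
  ⟨fun _ => rfl, fun _ _ => rfl, fun _ => rfl⟩

lemma taut_pp : Taut ((Form.var 0).imp (Form.var 0)) := by
  intro v hn hi
  rw [hi]
  cases v (Form.var 0) <;> simp

def chi (i j : Nat) : Form :=
  (Form.box ((Form.var i).imp (Form.var j))).imp (Form.box ((Form.var j).imp (Form.var i)))

def bigOrR : List Form → Form
  | [] => Form.neg ((Form.var 0).imp (Form.var 0))
  | a :: l => Form.disj a (bigOrR l)

lemma taut_mem_bigOrR {ψ : Form} : ∀ {l : List Form}, ψ ∈ l → Taut (ψ.imp (bigOrR l))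
  | a :: l, hm => by
    intro v hn hi
    rcases List.mem_cons.mp hm with h | h
    · subst h
      rw [hi, bigOrR, Form.disj, hi, hn]
      cases v ψ <;> simp
    · have ht := taut_mem_bigOrR h v hn hi
      rw [hi] at ht ⊢
      rw [bigOrR, Form.disj, hi, hn]
      cases hv : v ψ
      · simp
      · rw [hv] at ht; simp at ht; simp [ht]

def pairs (m : Nat) : List (Nat × Nat) :=
  (List.range m).flatMap fun j => (List.range j).map fun i => (i, j)

lemma mem_pairs {m i j : Nat} (hij : i < j) (hj : j < m) : (i, j) ∈ pairs m := by
  simp only [pairs, List.mem_flatMap, List.mem_map, List.mem_range]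
  exact ⟨j, hj, i, hij, rfl⟩

lemma mem_pairs' {m : Nat} {p : Nat × Nat} (hp : p ∈ pairs m) : p.1 < p.2 ∧ p.2 < m := by
  simp only [pairs, List.mem_flatMap, List.mem_map, List.mem_range] at hp
  obtain ⟨j, hj, i, hij, rfl⟩ := hp
  exact ⟨hij, hj⟩

def Phi (m : Nat) : Form := bigOrR ((pairs m).map fun p => chi p.1 p.2)

lemma ev_chi_false {m i j : Nat} (hij : i < j) (hj : j < m) (w : Fin m) :
    ev m (fun k w => decide (w.val ≤ k)) (chi i j) w = false := by
  set V : Nat → Fin m → Bool := fun k w => decide (w.val ≤ k) with hV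
  have h1 : ev m V (Form.box ((Form.var i).imp (Form.var j))) w = true := by
    rw [ev_box]
    intro u
    rw [ev_imp]
    intro hu
    simp only [hV, ev, decide_eq_true_eq] at hu ⊢
    omega
  have h2 : ev m V (Form.box ((Form.var j).imp (Form.var i))) w = false := by
    rw [← Bool.not_eq_true, ev_box]
    push_neg
    refine ⟨⟨j, hj⟩, fun hcon => ?_⟩
    rw [ev_imp] at hcon
    have := hcon (by simp [hV, ev])
    simp only [hV, ev, decide_eq_true_eq] at this
    omega
  have e : ev m V (chi i j) w
      = ((!(ev m V (Form.box ((Form.var i).imp (Form.var j))) w))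
        || ev m V (Form.box ((Form.var j).imp (Form.var i))) w) := rfl
  rw [e, h1, h2]
  rfl

lemma ev_bigOrR_false {m : Nat} {V : Nat → Fin m → Bool} {w : Fin m} :
    ∀ {l : List Form}, (∀ ψ ∈ l, ev m V ψ w = false) → ev m V (bigOrR l) w = false := by
  intro l
  induction l with
  | nil =>
      intro _
      show (!(!(V 0 w) || V 0 w)) = false
      cases V 0 w <;> rfl
  | cons a t ih =>
      intro hl
      have e : ev m V (bigOrR (a :: t)) w = ((!(!(ev m V a w))) || ev m V (bigOrR t) w) := rfl
      rw [e, hl a List.mem_cons_self, ih fun ψ h => hl ψ (List.mem_cons_of_mem a h)]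
      rfl

end Dug

/-- Dugundji-type theorem: no system between Km and T45m can be characterized by a
single finite deterministic logical matrix. -/
theorem no_finite_matrix_between_Km_T45m :
    ¬ ∃ Mat : DetMatrix, Finite Mat.carrier ∧
        (∀ (Γ : Set Form) (α : Form), Deriv KmAx Γ α → Mat.Entails Γ α) ∧
        (∀ φ : Form, Mat.Valid φ → Deriv T45mAx ∅ φ) := by
  rintro ⟨Mat, hfin, hKm, hT⟩
  classical
  haveI := Fintype.ofFinite Mat.carrier
  set n := Fintype.card Mat.carrier with hn
  set m := n + 1 with hm
  have himp_self : ∀ b : Mat.carrier, Mat.impOp b b ∈ Mat.desig := by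
    intro b
    have hder : Deriv KmAx ∅ ((Form.var 0).imp (Form.var 0)) :=
      Deriv.ax (KmAx.pc Dug.taut_pp)
    have := hKm ∅ _ hder (Dug.detVal Mat fun _ => b) (Dug.detVal_isVal Mat _)
      (fun γ hγ => absurd hγ (Set.notMem_empty γ))
    exact this
  have hvalid : Mat.Valid (Dug.Phi m) := by
    intro h hIsVal
    obtain ⟨hneg, himp, hbox⟩ := hIsVal
    have hcard : Fintype.card Mat.carrier < Fintype.card (Fin m) := by
      simp [hm, hn]
    obtain ⟨i0, j0, hne, heq0⟩ :=
      Fintype.exists_ne_map_eq_of_card_lt (fun i : Fin m => h (Form.var i.val)) hcard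
    obtain ⟨i, j, hij, heq⟩ : ∃ i j : Fin m, i.val < j.val ∧
        h (Form.var i.val) = h (Form.var j.val) := by
      rcases lt_or_gt_of_ne hne with hlt | hgt
      · exact ⟨i0, j0, hlt, heq0⟩
      · exact ⟨j0, i0, hgt, heq0.symm⟩
    have hchi : h (Dug.chi i.val j.val) ∈ Mat.desig := by
      have e1 : h (Dug.chi i.val j.val)
          = Mat.impOp (Mat.boxOp (Mat.impOp (h (Form.var i.val)) (h (Form.var j.val))))
                      (Mat.boxOp (Mat.impOp (h (Form.var j.val)) (h (Form.var i.val)))) := by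
        rw [Dug.chi, himp, hbox, hbox, himp, himp]
      rw [e1, heq]
      exact himp_self _
    have hmem : Dug.chi i.val j.val ∈ (Dug.pairs m).map (fun p => Dug.chi p.1 p.2) :=
      List.mem_map.mpr ⟨(i.val, j.val), Dug.mem_pairs hij j.isLt, rfl⟩
    have hder : Deriv KmAx {Dug.chi i.val j.val} (Dug.Phi m) :=
      Deriv.mp (Deriv.ax (KmAx.pc (Dug.taut_mem_bigOrR hmem)))
        (Deriv.prem (Set.mem_singleton _))
    refine hKm _ _ hder h ⟨hneg, himp, hbox⟩ ?_
    rintro γ rfl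
    exact hchi
  have hthm := hT _ hvalid
  have htrue := Dug.sound_T45m (V := fun k (w : Fin m) => decide (w.val ≤ k)) hthm
    ⟨0, Nat.succ_pos n⟩
  have hfalse : Dug.ev m (fun k w => decide (w.val ≤ k)) (Dug.Phi m) ⟨0, Nat.succ_pos n⟩
      = false := by
    apply Dug.ev_bigOrR_false
    intro ψ hψ
    obtain ⟨p, hp, rfl⟩ := List.mem_map.mp hψ
    obtain ⟨h1, h2⟩ := Dug.mem_pairs' hp
    exact Dug.ev_chi_false h1 h2 _
  rw [htrue] at hfalse
  exact absurd hfalse (by decide)
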